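/- Let α₁ ≥ 0, α₂, β ∈ ℝ, let M ≥ 1, N ≥ 0 be integers, and a, b ∈ ℂ* with aM + bN ≠ 0, a/(aM+bN) = α₁ + iα₂, b/(aM+bN) = iβ. Fix x, y ∈ ℂ* with (aM+bN) x^M y^N ∉ ℝ. Define for t ∈ ℝ: x(t) = x (1 - (aM+bN) x^M y^N t)^{-a/(aM+bN)} and y(t) = y (1 - (aM+bN) x^M y^N t)^{-b/(aM+bN)} (principal branches). Then there exists C > 0 such that for all t ∈ ℝ: |x(t)| ≤ C e^{|α₂|π} |x| and e^{-|β|π} |y| ≤ |y(t)| ≤ e^{|β|π} |y|. -/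

import Mathlib

open Complex Real

/-- Bounds on the explicit solutions of `x^M y^N (a x ∂_x + b y ∂_y)` when
`a/(aM+bN) = α₁ + iα₂` with `α₁ ≥ 0` and `b/(aM+bN) = iβ`:
`|x(t)| ≤ C e^{|α₂|π} |x|` and `e^{-|β|π}|y| ≤ |y(t)| ≤ e^{|β|π}|y|` for all real `t`. -/
theorem stmt_4 (α₁ α₂ β : ℝ) (hα₁ : 0 ≤ α₁) (M N : ℕ) (hM : 1 ≤ M)
    (a b : ℂ) (ha : a ≠ 0) (hb : b ≠ 0)
    (hs : a * M + b * N ≠ 0)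
    (hA : a / (a * M + b * N) = Complex.mk α₁ α₂)
    (hB : b / (a * M + b * N) = Complex.mk 0 β)
    (x y : ℂ) (hx : x ≠ 0) (hy : y ≠ 0)
    (hnr : ∀ r : ℝ, (a * M + b * N) * x ^ M * y ^ N ≠ (r : ℂ)) :
    ∃ C > 0, ∀ t : ℝ,
      ‖x * (1 - (a * M + b * N) * x ^ M * y ^ N * t) ^ (-(a / (a * M + b * N)))‖
        ≤ C * Real.exp (|α₂| * π) * ‖x‖ ∧
      Real.exp (-(|β| * π)) * ‖y‖
        ≤ ‖y * (1 - (a * M + b * N) * x ^ M * y ^ N * t) ^ (-(b / (a * M + b * N)))‖ ∧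
      ‖y * (1 - (a * M + b * N) * x ^ M * y ^ N * t) ^ (-(b / (a * M + b * N)))‖
        ≤ Real.exp (|β| * π) * ‖y‖ := by
  set s : ℂ := (a * M + b * N) * x ^ M * y ^ N with hsdef
  have hsim : s.im ≠ 0 := by
    intro h
    exact hnr s.re (Complex.ext (by simp) (by simp [h]))
  have hden : 0 < s.re ^ 2 + s.im ^ 2 := by positivity
  set δ : ℝ := Real.sqrt (s.im ^ 2 / (s.re ^ 2 + s.im ^ 2)) with hδdef
  have hδ : 0 < δ := Real.sqrt_pos.mpr (by positivity)
  have hδsq : δ ^ 2 = s.im ^ 2 / (s.re ^ 2 + s.im ^ 2) :=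
    Real.sq_sqrt (by positivity)
  refine ⟨δ ^ (-α₁), Real.rpow_pos_of_pos hδ _, fun t => ?_⟩
  set w : ℂ := 1 - s * t with hwdef
  have hwre : w.re = 1 - s.re * t := by simp [hwdef]
  have hwim : w.im = -(s.im * t) := by simp [hwdef]
  have hwsq : δ ^ 2 ≤ Complex.normSq w := by
    rw [Complex.normSq_apply, hwre, hwim, hδsq, div_le_iff₀ hden]
    nlinarith [sq_nonneg (s.re - (s.re ^ 2 + s.im ^ 2) * t), sq_nonneg (s.im * t)]
  have habs : δ ≤ ‖w‖ := by
    rw [Complex.norm_def]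
    exact Real.le_sqrt' hδ |>.mpr hwsq
  have hwne : w ≠ 0 := by
    intro h
    rw [h, norm_zero] at habs
    linarith
  have hargle : |Complex.arg w| ≤ π := Complex.abs_arg_le_pi w
  -- x part
  constructor
  · have hre : (-(a / (a * ↑M + b * ↑N))).re = -α₁ := by simp [hA]
    have him : (-(a / (a * ↑M + b * ↑N))).im = -α₂ := by simp [hA]
    rw [norm_mul,
      Complex.norm_cpow_of_ne_zero hwne, hre, him]
    have h1 : ‖w‖ ^ (-α₁) ≤ δ ^ (-α₁) :=
      Real.rpow_le_rpow_of_nonpos hδ habs (by linarith)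
    have h2 : 1 / Real.exp (Complex.arg w * -α₂) ≤ Real.exp (|α₂| * π) := by
      rw [one_div, ← Real.exp_neg]
      apply Real.exp_le_exp.mpr
      calc -(Complex.arg w * -α₂) = α₂ * Complex.arg w := by ring
        _ ≤ |α₂ * Complex.arg w| := le_abs_self _
        _ = |α₂| * |Complex.arg w| := abs_mul _ _
        _ ≤ |α₂| * π := mul_le_mul_of_nonneg_left hargle (abs_nonneg _)
    calc ‖x‖ * (‖w‖ ^ (-α₁) / Real.exp (Complex.arg w * -α₂))
        ≤ ‖x‖ * (δ ^ (-α₁) * Real.exp (|α₂| * π)) := by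
          rw [div_eq_mul_one_div]
          exact mul_le_mul_of_nonneg_left
            (mul_le_mul h1 h2 (by positivity) (by positivity)) (norm_nonneg _)
      _ = δ ^ (-α₁) * Real.exp (|α₂| * π) * ‖x‖ := by ring
  · have hre : (-(b / (a * ↑M + b * ↑N))).re = -0 := by simp [hB]
    have him : (-(b / (a * ↑M + b * ↑N))).im = -β := by simp [hB]
    rw [norm_mul,
      Complex.norm_cpow_of_ne_zero hwne, hre, him, neg_zero]
    have heq : ‖w‖ ^ (0:ℝ) / Real.exp (Complex.arg w * -β)
        = Real.exp (β * Complex.arg w) := by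
      rw [Real.rpow_zero, one_div, ← Real.exp_neg]
      ring_nf
    rw [heq]
    have hub : β * Complex.arg w ≤ |β| * π := by
      calc β * Complex.arg w ≤ |β * Complex.arg w| := le_abs_self _
        _ = |β| * |Complex.arg w| := abs_mul _ _
        _ ≤ |β| * π := mul_le_mul_of_nonneg_left hargle (abs_nonneg _)
    have hlb : -(|β| * π) ≤ β * Complex.arg w := by
      calc -(|β| * π) ≤ -(|β| * |Complex.arg w|) := by
            exact neg_le_neg (mul_le_mul_of_nonneg_left hargle (abs_nonneg _))
        _ = -|β * Complex.arg w| := by rw [abs_mul]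
        _ ≤ β * Complex.arg w := neg_abs_le _
    constructor
    · calc Real.exp (-(|β| * π)) * ‖y‖
          ≤ Real.exp (β * Complex.arg w) * ‖y‖ :=
            mul_le_mul_of_nonneg_right (Real.exp_le_exp.mpr hlb) (norm_nonneg _)
        _ = ‖y‖ * Real.exp (β * Complex.arg w) := mul_comm _ _
    · calc ‖y‖ * Real.exp (β * Complex.arg w)
          ≤ ‖y‖ * Real.exp (|β| * π) :=
            mul_le_mul_of_nonneg_left (Real.exp_le_exp.mpr hub) (norm_nonneg _)
        _ = Real.exp (|β| * π) * ‖y‖ := mul_comm _ _
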